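/- Let X be a collectionwise normal topological space (in particular, a paracompact Hausdorff space). Then every discrete family (A_i : i ∈ I) of subsets of X is strongly functionally discrete: there exists a discrete family (U_i : i ∈ I) of functionally open subsets of X such that the closure of A_i is contained in U_i for every i ∈ I. -/

import Mathlib

open Set Topology Metric Filter

universe u

/-- A set is functionally open if it is the preimage of an open set of reals
under a continuous real-valued function. -/
def FunOpen {X : Type*} [TopologicalSpace X] (U : Set X) : Prop :=
  ∃ (g : X → ℝ) (V : Set ℝ), Continuous g ∧ IsOpen V ∧ U = g ⁻¹' V

/-- A set is functionally closed if its complement is functionally open. -/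
def FunClosed {X : Type*} [TopologicalSpace X] (A : Set X) : Prop :=
  FunOpen Aᶜ

/-- A transfinite sequence `(U ξ : ξ ∈ [0, α])` is regular in `X`. -/
def IsRegularSeq {X : Type*} [TopologicalSpace X] (α : Ordinal.{u}) (U : Ordinal → Set X) : Prop :=
  (∀ ξ ≤ α, IsOpen (U ξ)) ∧
  U 0 = ∅ ∧
  U α = Set.univ ∧
  (∀ ξ η : Ordinal, ξ ≤ η → η < α → U ξ ⊆ U η) ∧
  (∀ γ ≤ α, Order.IsSuccLimit γ → U γ = ⋃ ξ < γ, U ξ)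

/-- `f` is functionally `ε`-fragmented: there is a regular sequence of functionally
open sets whose consecutive differences have `f`-image of diameter `< ε`. -/
def FunctionallyEpsFragmented {X Y : Type*} [TopologicalSpace X] [PseudoMetricSpace Y]
    (f : X → Y) (ε : ℝ) : Prop :=
  ∃ (α : Ordinal.{u}) (U : Ordinal → Set X),
    IsRegularSeq α U ∧ (∀ ξ ≤ α, FunOpen (U ξ)) ∧
    ∀ ξ < α, Metric.diam (f '' (U (ξ + 1) \ U ξ)) < ε

/-- An indexed family of sets is discrete: each point has a neighborhood meeting
at most one member of the family. -/
def DiscreteFamily {X ι : Type*} [TopologicalSpace X] (A : ι → Set X) : Prop :=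
  ∀ x : X, ∃ N ∈ 𝓝 x, {i : ι | (N ∩ A i).Nonempty}.Subsingleton

/-- An indexed family is strongly functionally discrete (sfd). -/
def SFDFamily {X ι : Type*} [TopologicalSpace X] (A : ι → Set X) : Prop :=
  ∃ U : ι → Set X, DiscreteFamily U ∧ (∀ i, FunOpen (U i)) ∧ ∀ i, closure (A i) ⊆ U i

/-- A set-indexed family of sets is discrete. -/
def DiscreteSetFamily {X : Type*} [TopologicalSpace X] (𝓐 : Set (Set X)) : Prop :=
  ∀ x : X, ∃ N ∈ 𝓝 x, {A ∈ 𝓐 | (N ∩ A).Nonempty}.Subsingleton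

/-- A family `𝓑` of subsets of `X` is a base for `f : X → Y`. -/
def IsBaseFor {X Y : Type*} [TopologicalSpace Y] (𝓑 : Set (Set X)) (f : X → Y) : Prop :=
  ∀ V : Set Y, IsOpen V → ∃ 𝓑V ⊆ 𝓑, f ⁻¹' V = ⋃₀ 𝓑V


/-- A T1 space is collectionwise normal if every discrete family of closed sets
can be separated by a pairwise disjoint family of open sets. -/
def CollectionwiseNormal (X : Type*) [TopologicalSpace X] : Prop :=
  ∀ 𝓕 : Set (Set X), (∀ F ∈ 𝓕, IsClosed F) → DiscreteSetFamily 𝓕 →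
    ∃ V : Set X → Set X, (∀ F ∈ 𝓕, IsOpen (V F)) ∧ (∀ F ∈ 𝓕, F ⊆ V F) ∧
      ∀ F ∈ 𝓕, ∀ G ∈ 𝓕, F ≠ G → Disjoint (V F) (V G)

/-- In a collectionwise normal (T1) space, every discrete family of sets is
strongly functionally discrete. -/
theorem statement10 {X : Type*} [TopologicalSpace X] [T1Space X]
    (hCN : CollectionwiseNormal X) {ι : Type*} (A : ι → Set X)
    (hA : DiscreteFamily A) :
    SFDFamily A := by
  classical
  set C : ι → Set X := fun i => closure (A i) with hCdef
  -- The closures form a discrete family, witnessed by open neighborhoods.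
  have hCdisc : ∀ x : X, ∃ O : Set X, IsOpen O ∧ x ∈ O ∧
      {i : ι | (O ∩ C i).Nonempty}.Subsingleton := by
    intro x
    obtain ⟨N, hN, hsub⟩ := hA x
    obtain ⟨O, hON, hO, hxO⟩ := mem_nhds_iff.mp hN
    refine ⟨O, hO, hxO, ?_⟩
    intro i hi j hj
    have key : ∀ k : ι, (O ∩ C k).Nonempty → (N ∩ A k).Nonempty := by
      intro k ⟨y, hyO, hyC⟩
      obtain ⟨z, hzO, hzA⟩ := mem_closure_iff.mp hyC O hO hyO
      exact ⟨z, hON hzO, hzA⟩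
    exact hsub (key i hi) (key j hj)
  -- If A i is nonempty and the closures agree, then i = j.
  have hinj : ∀ i j : ι, (A i).Nonempty → C i = C j → i = j := by
    intro i j ⟨x, hx⟩ hij
    obtain ⟨O, hO, hxO, hsub⟩ := hCdisc x
    have hxi : x ∈ C i := subset_closure hx
    exact hsub ⟨x, hxO, hxi⟩ ⟨x, hxO, hij ▸ hxi⟩
  -- The union of the closures is closed (local finiteness).
  have hLF : LocallyFinite C := by
    intro x
    obtain ⟨O, hO, hxO, hsub⟩ := hCdisc x
    refine ⟨O, hO.mem_nhds hxO, Set.Subsingleton.finite ?_⟩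
    intro i hi j hj
    exact hsub (by simpa [Set.inter_comm] using hi) (by simpa [Set.inter_comm] using hj)
  have hFclosed : IsClosed (⋃ i, C i) := hLF.isClosed_iUnion fun i => isClosed_closure
  -- Apply collectionwise normality to the family of closures of nonempty members.
  set 𝓕 : Set (Set X) := {S | ∃ i : ι, (A i).Nonempty ∧ S = C i} with h𝓕def
  have h𝓕closed : ∀ F ∈ 𝓕, IsClosed F := by
    rintro F ⟨i, -, rfl⟩; exact isClosed_closure
  have h𝓕disc : DiscreteSetFamily 𝓕 := by
    intro x
    obtain ⟨O, hO, hxO, hsub⟩ := hCdisc x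
    refine ⟨O, hO.mem_nhds hxO, ?_⟩
    rintro F ⟨⟨i, -, rfl⟩, hFne⟩ G ⟨⟨j, -, rfl⟩, hGne⟩
    exact congrArg C (hsub hFne hGne)
  obtain ⟨V, hVopen, hVsub, hVdisj⟩ := hCN 𝓕 h𝓕closed h𝓕disc
  -- The separating open sets, reindexed by ι.
  set W : ι → Set X := fun i => if h : (A i).Nonempty then V (C i) else ∅ with hWdef
  have hWopen : ∀ i, IsOpen (W i) := by
    intro i
    by_cases h : (A i).Nonempty
    · simp only [hWdef, dif_pos h]; exact hVopen _ ⟨i, h, rfl⟩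
    · simp only [hWdef, dif_neg h]; exact isOpen_empty
  have hCW : ∀ i, C i ⊆ W i := by
    intro i
    by_cases h : (A i).Nonempty
    · simp only [hWdef, dif_pos h]; exact hVsub _ ⟨i, h, rfl⟩
    · have : A i = ∅ := Set.not_nonempty_iff_eq_empty.mp h
      simp [hCdef, this]
  have hWdisj : ∀ i j : ι, i ≠ j → Disjoint (W i) (W j) := by
    intro i j hij
    by_cases hi : (A i).Nonempty
    · by_cases hj : (A j).Nonempty
      · simp only [hWdef, dif_pos hi, dif_pos hj]
        refine hVdisj _ ⟨i, hi, rfl⟩ _ ⟨j, hj, rfl⟩ ?_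
        intro hC
        exact hij (hinj i j hi hC)
      · simp only [hWdef, dif_neg hj]; exact disjoint_empty _
    · simp only [hWdef, dif_neg hi]; exact empty_disjoint _
  set G : Set X := ⋃ i, W i with hGdef
  have hGopen : IsOpen G := isOpen_iUnion hWopen
  have hFG : (⋃ i, C i) ⊆ G := Set.iUnion_mono hCW
  -- Collectionwise normal implies normal.
  have hNorm : NormalSpace X := by
    constructor
    intro s t hs ht hd
    by_cases hst : s = t
    · have hse : s = ∅ := by
        subst hst
        exact Disjoint.eq_bot_of_self hd
      refine ⟨∅, ∅, isOpen_empty, isOpen_empty, by simp [hse], by simp [hse, ← hst], disjoint_empty _⟩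
    · obtain ⟨V', hV'open, hV'sub, hV'disj⟩ := hCN {s, t}
        (by rintro F (rfl | rfl) <;> assumption)
        (by
          intro x
          by_cases hxs : x ∈ s
          · have hxt : x ∉ t := fun hxt => hd.ne_of_mem hxs hxt rfl
            refine ⟨tᶜ, ht.isOpen_compl.mem_nhds hxt, ?_⟩
            rintro F ⟨(rfl | rfl), hF⟩ G' ⟨(rfl | rfl), hG⟩ <;>
              first
              | rfl
              | (exfalso; obtain ⟨y, hy1, hy2⟩ := hF; exact hy1 hy2)
              | (exfalso; obtain ⟨y, hy1, hy2⟩ := hG; exact hy1 hy2)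
          · refine ⟨sᶜ, hs.isOpen_compl.mem_nhds hxs, ?_⟩
            rintro F ⟨(rfl | rfl), hF⟩ G' ⟨(rfl | rfl), hG⟩ <;>
              first
              | rfl
              | (exfalso; obtain ⟨y, hy1, hy2⟩ := hF; exact hy1 hy2)
              | (exfalso; obtain ⟨y, hy1, hy2⟩ := hG; exact hy1 hy2))
      exact ⟨V' s, V' t, hV'open s (by simp), hV'open t (by simp), hV'sub s (by simp),
        hV'sub t (by simp), hV'disj s (by simp) t (by simp) hst⟩
  -- Urysohn function: 0 on Gᶜ, 1 on the union of closures.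
  obtain ⟨f, hf0, hf1, hf01⟩ := exists_continuous_zero_one_of_isClosed
    (isClosed_compl_iff.mpr hGopen) hFclosed
    (disjoint_compl_left_iff_subset.mpr hFG)
  have hfnonneg : ∀ x, (0:ℝ) ≤ f x := fun x => (hf01 x).1
  -- Localized functions.
  set h : ι → X → ℝ := fun i x => if x ∈ W i then f x else 0 with hhdef
  have hh_le : ∀ i x, h i x ≤ f x := by
    intro i x
    by_cases hx : x ∈ W i <;> simp [hhdef, hx, hfnonneg x]
  have hh_nonneg : ∀ i x, (0:ℝ) ≤ h i x := by
    intro i x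
    by_cases hx : x ∈ W i <;> simp [hhdef, hx, hfnonneg x]
  have hGzero : ∀ x, x ∉ G → f x = 0 := fun x hx => hf0 hx
  have hhcont : ∀ i, Continuous (h i) := by
    intro i
    rw [continuous_iff_continuousAt]
    intro x
    by_cases hx : x ∈ W i
    · have : h i =ᶠ[𝓝 x] f := by
        filter_upwards [(hWopen i).mem_nhds hx] with y hy
        simp [hhdef, hy]
      exact (f.continuous.continuousAt).congr this.symm
    · by_cases hfx : f x = 0
      · have hhx : h i x = 0 := by simp [hhdef, hx]
        rw [ContinuousAt, hhx]
        have h1 : Filter.Tendsto (fun _ : X => (0:ℝ)) (𝓝 x) (𝓝 0) := tendsto_const_nhds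
        have h2 : Filter.Tendsto f (𝓝 x) (𝓝 0) := by
          have := f.continuous.continuousAt (x := x)
          rwa [ContinuousAt, hfx] at this
        exact tendsto_of_tendsto_of_tendsto_of_le_of_le h1 h2
          (fun y => hh_nonneg i y) (fun y => hh_le i y)
      · have hxG : x ∈ G := by
          by_contra hxG
          exact hfx (hGzero x hxG)
        obtain ⟨j, hj⟩ := Set.mem_iUnion.mp hxG
        have hij : i ≠ j := fun e => hx (e ▸ hj)
        have hz : ∀ᶠ y in 𝓝 x, h i y = 0 := by
          filter_upwards [(hWopen j).mem_nhds hj] with y hy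
          have : y ∉ W i := fun hyi => (hWdisj i j hij).ne_of_mem hyi hy rfl
          simp [hhdef, this]
        have hhx : h i x = 0 := by simp [hhdef, hx]
        rw [ContinuousAt, hhx]
        exact Filter.Tendsto.congr' (Filter.EventuallyEq.symm hz) tendsto_const_nhds
  -- The strongly functionally discrete family.
  refine ⟨fun i => h i ⁻¹' Set.Ioi (1/2 : ℝ), ?_, ?_, ?_⟩
  · -- discreteness
    intro x
    by_cases hxG : x ∈ G
    · obtain ⟨j, hj⟩ := Set.mem_iUnion.mp hxG
      refine ⟨W j, (hWopen j).mem_nhds hj, ?_⟩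
      intro i hi k hk
      have key : ∀ m : ι, (W j ∩ h m ⁻¹' Set.Ioi (1/2 : ℝ)).Nonempty → m = j := by
        intro m ⟨y, hyW, hy⟩
        have hy' : (1/2 : ℝ) < h m y := hy
        have hym : y ∈ W m := by
          by_contra hym
          simp [hhdef, hym] at hy'
          linarith
        by_contra hmj
        exact (hWdisj m j hmj).ne_of_mem hym hyW rfl
      rw [key i hi, key k hk]
    · refine ⟨f ⁻¹' Set.Iio (1/2 : ℝ), ?_, ?_⟩
      · refine (isOpen_Iio.preimage f.continuous).mem_nhds ?_
        simp [Set.mem_preimage, hGzero x hxG]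
      · intro i ⟨y, hy1, hy2⟩
        exfalso
        have : h i y ≤ f y := hh_le i y
        have : (1/2:ℝ) < h i y := hy2
        have : f y < (1/2:ℝ) := hy1
        linarith [hh_le i y]
  · -- functionally open
    intro i
    exact ⟨h i, Set.Ioi (1/2 : ℝ), hhcont i, isOpen_Ioi, rfl⟩
  · -- contains the closures
    intro i x hx
    have hxC : x ∈ C i := hx
    have hxW : x ∈ W i := hCW i hxC
    have hxF : x ∈ ⋃ k, C k := Set.mem_iUnion.mpr ⟨i, hxC⟩
    have hfx : f x = 1 := hf1 hxF
    have : h i x = 1 := by simp [hhdef, hxW, hfx]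
    simp only [Set.mem_preimage, Set.mem_Ioi, this]
    norm_num
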